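/- In the HGCRP instance constructed from a graph G as in the independent-set reduction, the coalitions of the form C_v in any socially optimal partition correspond to a maximum independent set of G. -/

import Mathlib

/-- A partition of the agents of type `α`, given as the map sending each agent to her
coalition: every agent belongs to her own coalition, and the coalitions are consistent. -/
def IsPartitionFn {α : Type*} [DecidableEq α] (C : α → Finset α) : Prop :=
  (∀ i, i ∈ C i) ∧ ∀ i j, i ∈ C j → C i = C j

/-- The social welfare of a partition: the sum of the agents' utilities. -/
noncomputable def welfare {α : Type*} [Fintype α] (U : Finset α → ℝ) (C : α → Finset α) : ℝ :=
  ∑ i, U (C i)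

/-- `C'` Pareto dominates `C`. -/
def ParetoDominates {α : Type*} (U : Finset α → ℝ) (C C' : α → Finset α) : Prop :=
  (∀ i, U (C i) ≤ U (C' i)) ∧ ∃ i, U (C i) < U (C' i)

/-- No partition Pareto dominates `C`. -/
def ParetoOptimal {α : Type*} [DecidableEq α] (U : Finset α → ℝ) (C : α → Finset α) : Prop :=
  ¬ ∃ C', IsPartitionFn C' ∧ ParetoDominates U C C'

/-- No nonempty coalition blocks `C`. -/
def CoreStable {α : Type*} (U : Finset α → ℝ) (C : α → Finset α) : Prop :=
  ¬ ∃ S : Finset α, S.Nonempty ∧ ∀ i ∈ S, U (C i) < U S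

/-- No agent can beneficially move to an existing (possibly empty) coalition without
making the members of that coalition worse off. -/
def IndividuallyStable {α : Type*} [DecidableEq α] (U : Finset α → ℝ) (C : α → Finset α) : Prop :=
  ¬ ∃ i T, i ∉ T ∧ (T = ∅ ∨ ((∃ j, C j = T) ∧ U T ≤ U (insert i T))) ∧
    U (C i) < U (insert i T)

/-- No agent can beneficially move to an existing (possibly empty) coalition. -/
def NashStable {α : Type*} [DecidableEq α] (U : Finset α → ℝ) (C : α → Finset α) : Prop :=
  ¬ ∃ i T, i ∉ T ∧ (T = ∅ ∨ ∃ j, C j = T) ∧ U (C i) < U (insert i T)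

/-- The sequence of the agents' utilities in partition `C`, sorted in non-increasing order. -/
noncomputable def psi {α : Type*} [Fintype α] (U : Finset α → ℝ) (C : α → Finset α) : List ℝ :=
  (Finset.univ.val.map fun i => U (C i)).sort (· ≥ ·)

open scoped Classical

section Aux

variable {V : Type*} [Fintype V] [DecidableEq V] (G : SimpleGraph V) [DecidableRel G.Adj]

lemma mem_Cv_iff (Cv : V → Finset G.edgeSet)
    (hCv : ∀ v : V, Cv v = Finset.univ.filter (fun e : G.edgeSet => v ∈ (e : Sym2 V)))
    (v : V) (e : G.edgeSet) : e ∈ Cv v ↔ v ∈ (e : Sym2 V) := by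
  rw [hCv]; simp

lemma Cv_disj (Cv : V → Finset G.edgeSet)
    (hCv : ∀ v : V, Cv v = Finset.univ.filter (fun e : G.edgeSet => v ∈ (e : Sym2 V)))
    {v w : V} (hne : v ≠ w) (hadj : ¬ G.Adj v w) {e : G.edgeSet}
    (hv : e ∈ Cv v) (hw : e ∈ Cv w) : False := by
  rw [mem_Cv_iff G Cv hCv] at hv hw
  have he : (e : Sym2 V) = s(v, w) := (Sym2.mem_and_mem_iff hne).mp ⟨hv, hw⟩
  exact hadj (G.mem_edgeSet.mp (he ▸ e.2))

lemma lemA (Cv : V → Finset G.edgeSet)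
    (hCv : ∀ v : V, Cv v = Finset.univ.filter (fun e : G.edgeSet => v ∈ (e : Sym2 V)))
    (hiso : ∀ v : V, (Cv v).Nonempty)
    (U : Finset G.edgeSet → ℝ)
    (hU1 : ∀ v : V, (Cv v).Nonempty → U (Cv v) = 1 / ((Cv v).card : ℝ))
    (hUpos : ∀ e : G.edgeSet, 0 ≤ U ({e} : Finset G.edgeSet))
    (t : Finset V) (hind : ∀ v ∈ t, ∀ w ∈ t, v ≠ w → ¬ G.Adj v w) :
    ∃ C : G.edgeSet → Finset G.edgeSet, IsPartitionFn C ∧ (t.card : ℝ) ≤ welfare U C := by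
  set C : G.edgeSet → Finset G.edgeSet :=
    fun e => if h : ∃ v ∈ t, e ∈ Cv v then Cv h.choose else {e} with hC
  have huniq : ∀ (e : G.edgeSet) (v : V), v ∈ t → e ∈ Cv v → C e = Cv v := by
    intro e v hvt hev
    have h : ∃ v ∈ t, e ∈ Cv v := ⟨v, hvt, hev⟩
    obtain ⟨hct, hce⟩ := h.choose_spec
    have : C e = Cv h.choose := by simp only [hC]; rw [dif_pos h]
    rw [this]
    rcases eq_or_ne h.choose v with h' | h'
    · rw [h']
    · exact (Cv_disj G Cv hCv h' (hind _ hct _ hvt h') hce hev).elim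
  have hneg : ∀ e : G.edgeSet, (¬ ∃ v ∈ t, e ∈ Cv v) → C e = {e} := by
    intro e h; simp only [hC]; rw [dif_neg h]
  have hpart : IsPartitionFn C := by
    constructor
    · intro e
      by_cases h : ∃ v ∈ t, e ∈ Cv v
      · obtain ⟨v, hvt, hev⟩ := h
        rw [huniq e v hvt hev]; exact hev
      · rw [hneg e h]; exact Finset.mem_singleton_self e
    · intro i j hij
      by_cases h : ∃ v ∈ t, j ∈ Cv v
      · obtain ⟨v, hvt, hjv⟩ := h
        rw [huniq j v hvt hjv] at hij ⊢
        exact huniq i v hvt hij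
      · rw [hneg j h] at hij
        rw [Finset.mem_singleton.mp hij]
  refine ⟨C, hpart, ?_⟩
  have hpd : (↑t : Set V).PairwiseDisjoint Cv := by
    intro a ha b hb hab
    rw [Function.onFun, Finset.disjoint_left]
    intro e hea heb
    exact Cv_disj G Cv hCv hab (hind a ha b hb hab) hea heb
  have hsum : ∑ e ∈ t.biUnion Cv, U (C e) = (t.card : ℝ) := by
    rw [Finset.sum_biUnion hpd]
    have hin : ∀ v ∈ t, ∑ e ∈ Cv v, U (C e) = 1 := by
      intro v hv
      have h1 : ∀ e ∈ Cv v, U (C e) = 1 / ((Cv v).card : ℝ) := by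
        intro e he
        rw [huniq e v hv he, hU1 v (hiso v)]
      rw [Finset.sum_congr rfl h1, Finset.sum_const, nsmul_eq_mul]
      have hc : ((Cv v).card : ℝ) ≠ 0 := by
        exact_mod_cast Finset.card_ne_zero_of_mem (hiso v).choose_spec
      field_simp
    rw [Finset.sum_congr rfl hin, Finset.sum_const, nsmul_eq_mul, mul_one]
  have hsd := Finset.sum_sdiff (f := fun e => U (C e)) (Finset.subset_univ (t.biUnion Cv))
  have hnn : 0 ≤ ∑ e ∈ Finset.univ \ t.biUnion Cv, U (C e) := by
    apply Finset.sum_nonneg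
    intro e he
    have he' : ¬ ∃ v ∈ t, e ∈ Cv v := by
      intro ⟨v, hv, hev⟩
      exact (Finset.mem_sdiff.mp he).2 (Finset.mem_biUnion.mpr ⟨v, hv, hev⟩)
    rw [hneg e he']
    exact hUpos e
  calc (t.card : ℝ) = ∑ e ∈ t.biUnion Cv, U (C e) := hsum.symm
    _ ≤ ∑ e ∈ Finset.univ \ t.biUnion Cv, U (C e) + ∑ e ∈ t.biUnion Cv, U (C e) :=
        le_add_of_nonneg_left hnn
    _ = ∑ e, U (C e) := hsd
    _ = welfare U C := rfl

lemma lemB (ε : ℝ) (hε0 : 0 < ε) (Cv : V → Finset G.edgeSet)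
    (hCv : ∀ v : V, Cv v = Finset.univ.filter (fun e : G.edgeSet => v ∈ (e : Sym2 V)))
    (hiso : ∀ v : V, (Cv v).Nonempty)
    (U : Finset G.edgeSet → ℝ)
    (hU1 : ∀ v : V, (Cv v).Nonempty → U (Cv v) = 1 / ((Cv v).card : ℝ))
    (hU2 : ∀ e : G.edgeSet, (¬ ∃ v, ({e} : Finset G.edgeSet) = Cv v) → U {e} = ε)
    (hU3 : ∀ S : Finset G.edgeSet, (¬ ∃ v, (Cv v).Nonempty ∧ S = Cv v) → S.card ≠ 1 → U S = 0)
    (Cstar : G.edgeSet → Finset G.edgeSet) (hCstar : IsPartitionFn Cstar)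
    (Istar : Finset (Finset G.edgeSet))
    (hIstar : Istar = (Finset.univ.image Cstar).filter (fun P => ∃ v, P = Cv v)) :
    welfare U Cstar ≤ (Istar.card : ℝ) + ε * (Fintype.card G.edgeSet : ℝ) := by
  have key1 : ∀ P ∈ Istar, ∀ e ∈ P, Cstar e = P := by
    intro P hP e heP
    rw [hIstar, Finset.mem_filter, Finset.mem_image] at hP
    obtain ⟨⟨i, _, hi⟩, _⟩ := hP
    rw [← hi] at heP ⊢
    exact hCstar.2 e i heP
  set D : Finset G.edgeSet := Istar.biUnion id with hD
  have hpd : (↑Istar : Set (Finset G.edgeSet)).PairwiseDisjoint (id : Finset G.edgeSet → Finset G.edgeSet) := by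
    intro a ha b hb hab
    rw [Function.onFun, Finset.disjoint_left]
    intro e hea heb
    exact hab ((key1 a ha e hea).symm.trans (key1 b hb e heb))
  have sumD : ∑ e ∈ D, U (Cstar e) = (Istar.card : ℝ) := by
    rw [hD, Finset.sum_biUnion hpd]
    simp only [id_eq]
    have hin : ∀ P ∈ Istar, ∑ e ∈ P, U (Cstar e) = 1 := by
      intro P hP
      have hPv : ∃ v, P = Cv v := by
        rw [hIstar, Finset.mem_filter] at hP; exact hP.2
      obtain ⟨v, hv⟩ := hPv
      have hUP : U P = 1 / ((P.card : ℝ)) := by rw [hv]; exact hU1 v (hiso v)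
      have h1 : ∀ e ∈ P, U (Cstar e) = 1 / ((P.card : ℝ)) := by
        intro e he; rw [key1 P hP e he, hUP]
      rw [Finset.sum_congr rfl h1, Finset.sum_const, nsmul_eq_mul]
      have hc : ((P.card : ℝ)) ≠ 0 := by
        have : P.Nonempty := hv ▸ hiso v
        exact_mod_cast Finset.card_ne_zero_of_mem this.choose_spec
      field_simp
    rw [Finset.sum_congr rfl hin, Finset.sum_const, nsmul_eq_mul, mul_one]
  have hboff : ∀ e ∈ Finset.univ \ D, U (Cstar e) ≤ ε := by
    intro e he
    have heD : e ∉ D := (Finset.mem_sdiff.mp he).2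
    have hnv : ¬ ∃ v, Cstar e = Cv v := by
      intro ⟨v, hv⟩
      apply heD
      have hmem : Cstar e ∈ Istar := by
        rw [hIstar, Finset.mem_filter]
        exact ⟨Finset.mem_image.mpr ⟨e, Finset.mem_univ e, rfl⟩, v, hv⟩
      exact Finset.mem_biUnion.mpr ⟨Cstar e, hmem, hCstar.1 e⟩
    by_cases hc : (Cstar e).card = 1
    · obtain ⟨a, ha⟩ := Finset.card_eq_one.mp hc
      have hea : e = a := Finset.mem_singleton.mp (ha ▸ hCstar.1 e)
      have hse : Cstar e = {e} := by rw [ha, hea]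
      rw [hse, hU2 e (fun ⟨v, hv⟩ => hnv ⟨v, hse.trans hv⟩)]
    · rw [hU3 (Cstar e) (fun ⟨v, _, hv⟩ => hnv ⟨v, hv⟩) hc]
      exact hε0.le
  have hsd := Finset.sum_sdiff (f := fun e => U (Cstar e)) (Finset.subset_univ D)
  have hb2 : ∑ e ∈ Finset.univ \ D, U (Cstar e) ≤ ε * (Fintype.card G.edgeSet : ℝ) := by
    calc ∑ e ∈ Finset.univ \ D, U (Cstar e) ≤ (Finset.univ \ D).card • ε :=
          Finset.sum_le_card_nsmul _ _ ε hboff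
      _ = ((Finset.univ \ D).card : ℝ) * ε := nsmul_eq_mul _ _
      _ ≤ (Fintype.card G.edgeSet : ℝ) * ε := by
          apply mul_le_mul_of_nonneg_right _ hε0.le
          exact_mod_cast Finset.card_le_card (Finset.subset_univ _)
      _ = ε * (Fintype.card G.edgeSet : ℝ) := mul_comm _ _
  calc welfare U Cstar = ∑ e, U (Cstar e) := rfl
    _ = ∑ e ∈ Finset.univ \ D, U (Cstar e) + ∑ e ∈ D, U (Cstar e) := hsd.symm
    _ ≤ ε * (Fintype.card G.edgeSet : ℝ) + (Istar.card : ℝ) := by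
        rw [sumD]; exact add_le_add_left hb2 _
    _ = (Istar.card : ℝ) + ε * (Fintype.card G.edgeSet : ℝ) := add_comm _ _

end Aux


open scoped Classical in
/-- In the HGCRP instance constructed from a graph `G` as in the independent-set reduction,
the `Cv`-coalitions of any socially optimal partition correspond to a maximum independent
set of `G`. -/
theorem stmt13 {V : Type*} [Fintype V] [DecidableEq V]
    (G : SimpleGraph V) [DecidableRel G.Adj]
    (ε : ℝ) (hε0 : 0 < ε) (hε1 : ε ≤ 1 / (Fintype.card G.edgeSet : ℝ) ^ 2)
    (Cv : V → Finset G.edgeSet)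
    (hCv : ∀ v : V, Cv v = Finset.univ.filter (fun e : G.edgeSet => v ∈ (e : Sym2 V)))
    (hiso : ∀ v : V, (Cv v).Nonempty)
    (U : Finset G.edgeSet → ℝ)
    (hU1 : ∀ v : V, (Cv v).Nonempty → U (Cv v) = 1 / ((Cv v).card : ℝ))
    (hU2 : ∀ e : G.edgeSet, (¬ ∃ v, ({e} : Finset G.edgeSet) = Cv v) → U {e} = ε)
    (hU3 : ∀ S : Finset G.edgeSet, (¬ ∃ v, (Cv v).Nonempty ∧ S = Cv v) → S.card ≠ 1 → U S = 0)
    (Cstar : G.edgeSet → Finset G.edgeSet) (hCstar : IsPartitionFn Cstar)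
    (hopt : ∀ C : G.edgeSet → Finset G.edgeSet, IsPartitionFn C →
      welfare U C ≤ welfare U Cstar)
    (Istar : Finset (Finset G.edgeSet))
    (hIstar : Istar = (Finset.univ.image Cstar).filter (fun P => ∃ v, P = Cv v)) :
    ∃ s : Finset V, Istar = s.image Cv ∧ s.card = Istar.card ∧
      (∀ v ∈ s, ∀ w ∈ s, v ≠ w → ¬ G.Adj v w) ∧
      ∀ t : Finset V, (∀ v ∈ t, ∀ w ∈ t, v ≠ w → ¬ G.Adj v w) → t.card ≤ s.card := by
  have hrep : ∀ P ∈ Istar, ∃ v, P = Cv v := by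
    intro P hP; rw [hIstar, Finset.mem_filter] at hP; exact hP.2
  have key1 : ∀ P ∈ Istar, ∀ e ∈ P, Cstar e = P := by
    intro P hP e heP
    rw [hIstar, Finset.mem_filter, Finset.mem_image] at hP
    obtain ⟨⟨i, _, hi⟩, _⟩ := hP
    rw [← hi] at heP ⊢
    exact hCstar.2 e i heP
  set f : {x // x ∈ Istar} → V := fun P => (hrep P.1 P.2).choose with hf
  have hfspec : ∀ P : {x // x ∈ Istar}, P.1 = Cv (f P) := fun P => (hrep P.1 P.2).choose_spec
  set s : Finset V := Istar.attach.image f with hs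
  have h1 : Istar = s.image Cv := by
    rw [hs, Finset.image_image]
    have he : (Cv ∘ f) = fun P : {x // x ∈ Istar} => P.1 := by
      funext P; exact (hfspec P).symm
    rw [he]
    exact Finset.attach_image_val.symm
  have hinj : Set.InjOn f ↑Istar.attach := by
    intro P _ Q _ h
    apply Subtype.ext
    rw [hfspec P, hfspec Q, h]
  have h2 : s.card = Istar.card := by
    rw [hs, Finset.card_image_of_injOn hinj, Finset.card_attach]
  have h3 : ∀ v ∈ s, ∀ w ∈ s, v ≠ w → ¬ G.Adj v w := by
    intro v hv w hw hvw hadj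
    rw [hs, Finset.mem_image] at hv hw
    obtain ⟨P, hP, hPv⟩ := hv
    obtain ⟨Q, hQ, hQw⟩ := hw
    have hae : s(v, w) ∈ G.edgeSet := G.mem_edgeSet.mpr hadj
    set e : G.edgeSet := ⟨s(v, w), hae⟩ with he
    have hev : e ∈ Cv v := by
      rw [mem_Cv_iff G Cv hCv]
      exact Sym2.mem_mk_left v w
    have hew : e ∈ Cv w := by
      rw [mem_Cv_iff G Cv hCv]
      exact Sym2.mem_mk_right v w
    have hPe : e ∈ P.1 := by rw [hfspec P, hPv]; exact hev
    have hQe : e ∈ Q.1 := by rw [hfspec Q, hQw]; exact hew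
    have hPQ : P = Q := Subtype.ext ((key1 P.1 P.2 e hPe).symm.trans (key1 Q.1 Q.2 e hQe))
    exact hvw (by rw [← hPv, ← hQw, hPQ])
  refine ⟨s, h1, h2, h3, ?_⟩
  intro t hind
  rw [h2]
  have hUpos : ∀ e : G.edgeSet, 0 ≤ U ({e} : Finset G.edgeSet) := by
    intro e
    by_cases h : ∃ v, ({e} : Finset G.edgeSet) = Cv v
    · obtain ⟨v, hv⟩ := h
      rw [hv, hU1 v (hiso v)]
      exact div_nonneg zero_le_one (Nat.cast_nonneg _)
    · rw [hU2 e h]; exact hε0.le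
  obtain ⟨C, hpC, hwC⟩ := lemA G Cv hCv hiso U hU1 hUpos t hind
  have hb := lemB G ε hε0 Cv hCv hiso U hU1 hU2 hU3 Cstar hCstar Istar hIstar
  have hchain : (t.card : ℝ) ≤ (Istar.card : ℝ) + ε * (Fintype.card G.edgeSet : ℝ) :=
    hwC.trans ((hopt C hpC).trans hb)
  rcases Nat.lt_or_ge (Fintype.card G.edgeSet) 2 with hn2 | hn2
  · -- n = 0 or n = 1
    interval_cases hn : Fintype.card G.edgeSet
    · -- n = 0 : no edges, so t must be empty
      have hempty : IsEmpty G.edgeSet := Fintype.card_eq_zero_iff.mp hn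
      have ht : t = ∅ := by
        apply Finset.eq_empty_of_forall_notMem
        intro v hv
        exact hempty.elim (hiso v).choose
      simp [ht]
    · -- n = 1
      obtain ⟨e0, he0⟩ := Fintype.card_eq_one_iff.mp hn
      have ht1 : t.card ≤ 1 := by
        rw [Finset.card_le_one]
        intro a ha b hb
        by_contra hab
        obtain ⟨ea, hea⟩ := hiso a
        obtain ⟨eb, heb⟩ := hiso b
        rw [he0 ea, mem_Cv_iff G Cv hCv] at hea
        rw [he0 eb, mem_Cv_iff G Cv hCv] at heb
        have hedge : (e0 : Sym2 V) = s(a, b) := (Sym2.mem_and_mem_iff hab).mp ⟨hea, heb⟩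
        exact hind a ha b hb hab (G.mem_edgeSet.mp (hedge ▸ e0.2))
      have hv0 : (e0 : Sym2 V).out.1 ∈ (e0 : Sym2 V) := Sym2.out_fst_mem _
      have hCveq : Cstar e0 = Cv (e0 : Sym2 V).out.1 := by
        apply Finset.ext
        intro x
        rw [he0 x]
        exact iff_of_true (hCstar.1 e0) ((mem_Cv_iff G Cv hCv _ e0).mpr hv0)
      have hmem : Cstar e0 ∈ Istar := by
        rw [hIstar, Finset.mem_filter]
        exact ⟨Finset.mem_image.mpr ⟨e0, Finset.mem_univ e0, rfl⟩, _, hCveq⟩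
      have : 1 ≤ Istar.card := Finset.card_pos.mpr ⟨_, hmem⟩
      omega
  · -- n ≥ 2
    have hnR : (2 : ℝ) ≤ (Fintype.card G.edgeSet : ℝ) := by exact_mod_cast hn2
    have hn0 : (0 : ℝ) < (Fintype.card G.edgeSet : ℝ) := by linarith
    have hmul : ε * (Fintype.card G.edgeSet : ℝ) ≤ 1 / (Fintype.card G.edgeSet : ℝ) := by
      calc ε * (Fintype.card G.edgeSet : ℝ)
          ≤ 1 / (Fintype.card G.edgeSet : ℝ) ^ 2 * (Fintype.card G.edgeSet : ℝ) :=
            mul_le_mul_of_nonneg_right hε1 hn0.le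
        _ = 1 / (Fintype.card G.edgeSet : ℝ) := by
            rw [pow_two]
            field_simp
    have hlt1 : 1 / (Fintype.card G.edgeSet : ℝ) < 1 := by
      rw [div_lt_one hn0]; linarith
    have hlt : (t.card : ℝ) < (Istar.card : ℝ) + 1 := by linarith
    have : t.card < Istar.card + 1 := by exact_mod_cast hlt
    omega
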